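/- Let k ≥ 0 and n, p ≥ 0. The number of words π ∈ [2k+1]^n with des_O(π) = p, where O is the set of odd positive integers (equivalently, the number of words π ∈ [2k+1]^n with ris_O(π) = p), equals Σ_{m=0}^{n} Σ_{j=0}^{m} Σ_{i=0}^{kj+j} (−1)^{n+p+j} · 2^{m−n+i} · C(m, j) · C(m−j, n−i) · C(kj+j, i) · C(n−m, p), where each summand is interpreted in ℚ (every term in which the exponent m−n+i is negative has C(m−j, n−i) = 0 and hence vanishes, so the total is an integer). -/

import Mathlib

open Finset

/-- The number of descents of the word `w : Fin n → Fin k` (encoding a word over the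
alphabet `[k] = {1,…,k}`, position `p` carrying the letter `(w p : ℕ) + 1`) whose
first element satisfies `X`. -/
def descCount (X : ℕ → Prop) [DecidablePred X] {k n : ℕ} (w : Fin n → Fin k) : ℕ :=
  (Finset.univ.filter (fun p : Fin n × Fin n =>
    (p.1 : ℕ) + 1 = (p.2 : ℕ) ∧ (w p.2 : ℕ) < (w p.1 : ℕ) ∧ X ((w p.1 : ℕ) + 1))).card

/-- The number of rises of the word `w` whose first element satisfies `X`. -/
def riseCount (X : ℕ → Prop) [DecidablePred X] {k n : ℕ} (w : Fin n → Fin k) : ℕ :=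
  (Finset.univ.filter (fun p : Fin n × Fin n =>
    (p.1 : ℕ) + 1 = (p.2 : ℕ) ∧ (w p.1 : ℕ) < (w p.2 : ℕ) ∧ X ((w p.1 : ℕ) + 1))).card

open Polynomial

lemma descCount_eq_sum (X : ℕ → Prop) [DecidablePred X] {K n : ℕ} (w : Fin (n+1) → Fin K) :
    descCount X w = ∑ i : Fin n,
      if ((w i.succ : ℕ) < (w i.castSucc : ℕ) ∧ X ((w i.castSucc : ℕ) + 1)) then 1 else 0 := by
  classical
  rw [← Finset.card_filter, descCount]
  refine (Finset.card_bij (fun (i : Fin n) _ => (i.castSucc, i.succ)) ?_ ?_ ?_).symm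
  · intro i hi
    simp only [Finset.mem_filter, Finset.mem_univ, true_and] at hi ⊢
    exact ⟨by simp, hi⟩
  · intro i _ j _ hij
    have : i.castSucc = j.castSucc := congrArg Prod.fst hij
    exact Fin.castSucc_injective _ this
  · intro p hp
    simp only [Finset.mem_filter, Finset.mem_univ, true_and] at hp
    have h2 := p.2.isLt
    have h1 : (p.1 : ℕ) < n := by omega
    refine ⟨⟨(p.1 : ℕ), h1⟩, ?_, ?_⟩
    · have he1 : (⟨(p.1:ℕ), h1⟩ : Fin n).castSucc = p.1 := by apply Fin.ext; simp
      have he2 : (⟨(p.1:ℕ), h1⟩ : Fin n).succ = p.2 := by apply Fin.ext; simp [hp.1]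
      simp only [Finset.mem_filter, Finset.mem_univ, true_and, he1, he2]
      exact hp.2
    · have he1 : (⟨(p.1:ℕ), h1⟩ : Fin n).castSucc = p.1 := by apply Fin.ext; simp
      have he2 : (⟨(p.1:ℕ), h1⟩ : Fin n).succ = p.2 := by apply Fin.ext; simp [hp.1]
      show (Fin.castSucc _, Fin.succ _) = p
      rw [he1, he2]

lemma descCount_len1 (X : ℕ → Prop) [DecidablePred X] {K : ℕ} (w : Fin 1 → Fin K) :
    descCount X w = 0 := by
  rw [descCount_eq_sum]; simp

lemma descCount_len0 (X : ℕ → Prop) [DecidablePred X] {K : ℕ} (w : Fin 0 → Fin K) :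
    descCount X w = 0 := by
  rw [descCount, Finset.card_eq_zero, Finset.filter_eq_empty_iff]
  intro p _
  exact p.1.elim0

lemma descCount_cons (X : ℕ → Prop) [DecidablePred X] {K n : ℕ} (a : Fin K)
    (w : Fin (n+1) → Fin K) :
    descCount X (Fin.cons a w) = descCount X w
      + (if ((w 0 : ℕ) < (a : ℕ) ∧ X ((a : ℕ) + 1)) then 1 else 0) := by
  rw [descCount_eq_sum, descCount_eq_sum, Fin.sum_univ_succ]
  simp only [Fin.castSucc_zero, Fin.cons_zero, Fin.cons_succ, ← Fin.succ_castSucc,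
    Fin.cons_succ]
  ring

/-- The odd-letters predicate. -/
def OO : ℕ → Prop := fun x => x % 2 = 1

instance : DecidablePred OO := fun x => inferInstanceAs (Decidable (x % 2 = 1))

noncomputable def Pk (k n : ℕ) : Polynomial ℚ :=
  ∑ w : Fin n → Fin (2*k+1), Polynomial.X ^ (descCount OO w)

noncomputable def Sk (k n a : ℕ) : Polynomial ℚ :=
  ∑ w : Fin (n+1) → Fin (2*k+1),
    if (w 0 : ℕ) < a then Polynomial.X ^ (descCount OO w) else 0

lemma sum_fun_cons {n : ℕ} {A : Type*} [Fintype A] [DecidableEq A]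
    (f : (Fin (n+1) → A) → Polynomial ℚ) :
    ∑ w : Fin (n+1) → A, f w = ∑ a : A, ∑ w : Fin n → A, f (Fin.cons a w) := by
  rw [← (Fin.consEquiv (fun _ : Fin (n+1) => A)).sum_comp, Fintype.sum_prod_type]
  rfl

lemma Pk_zero (k : ℕ) : Pk k 0 = 1 := by
  rw [Pk]
  simp only [descCount_len0, pow_zero]
  rw [Finset.sum_const, Finset.card_univ]
  simp

lemma Pk_one (k : ℕ) : Pk k 1 = (2*k+1) • (1 : Polynomial ℚ) := by
  rw [Pk]
  simp only [descCount_len1, pow_zero]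
  rw [Finset.sum_const, Finset.card_univ]
  simp

lemma Bsplit (k n : ℕ) (b : Fin (2*k+1)) :
    ∑ w : Fin (n+1) → Fin (2*k+1), (Polynomial.X : Polynomial ℚ) ^ (descCount OO (Fin.cons b w))
      = Pk k (n+1) + (if ((b:ℕ)+1) % 2 = 1 then (Polynomial.X - 1) * Sk k n (b:ℕ) else 0) := by
  simp only [descCount_cons]
  by_cases hb : ((b:ℕ)+1) % 2 = 1
  · have hOO : OO ((b:ℕ)+1) := hb
    simp only [if_pos hb, hOO, and_true]
    have key : ∀ w : Fin (n+1) → Fin (2*k+1),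
        (Polynomial.X : Polynomial ℚ) ^ (descCount OO w + if (w 0 : ℕ) < (b:ℕ) then 1 else 0)
        = Polynomial.X ^ (descCount OO w)
          + (Polynomial.X - 1) * (if (w 0 : ℕ) < (b:ℕ) then Polynomial.X ^ (descCount OO w) else 0) := by
      intro w
      split_ifs with h
      · rw [pow_add]; ring
      · rw [add_zero]; ring
    simp only [key]
    rw [Finset.sum_add_distrib, ← Finset.mul_sum]
    rfl
  · have hOO : ¬ OO ((b:ℕ)+1) := hb
    simp only [if_neg hb, hOO, and_false, if_false, add_zero]
    rfl

section helpers
variable {M : Type*} [AddCommMonoid M]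

lemma H1 {N a : ℕ} (h : a ≤ N) (f : ℕ → M) :
    ∑ b ∈ range N, (if b < a then f b else 0) = ∑ b ∈ range a, f b := by
  rw [← Finset.sum_subset (Finset.range_subset_range.2 h)
    (fun x _ hx => by rw [if_neg (by simp at hx ⊢; omega)])]
  exact Finset.sum_congr rfl fun x hx => if_pos (Finset.mem_range.1 hx)

lemma H2 (a : ℕ) (f : ℕ → M) :
    ∑ b ∈ range a, (if (b+1) % 2 = 1 then f b else 0)
      = ∑ j ∈ range ((a+1)/2), f (2*j) := by
  induction a with
  | zero => simp
  | succ a ih =>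
    rw [Finset.sum_range_succ, ih]
    by_cases ha : a % 2 = 0
    · rw [if_pos (by omega)]
      have h1 : (a+2)/2 = (a+1)/2 + 1 := by omega
      rw [h1, Finset.sum_range_succ]
      congr 1
      congr 1
      omega
    · rw [if_neg (by omega), add_zero]
      have h1 : (a+1+1)/2 = (a+1)/2 := by omega
      rw [h1]
end helpers

lemma hockey (i : ℕ) (j : ℕ) : ∑ j' ∈ range j, Nat.choose j' i = j.choose (i+1) := by
  induction j with
  | zero => simp
  | succ j ih =>
    rw [Finset.sum_range_succ, ih]
    simp [Nat.choose_succ_succ, Nat.succ_eq_add_one]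
    omega
lemma Sk_top (k n : ℕ) : Sk k n (2*k+1) = Pk k (n+1) := by
  rw [Sk, Pk]; exact Finset.sum_congr rfl fun w _ => if_pos (w 0).isLt

lemma Sk_zero (k a : ℕ) (ha : a ≤ 2*k+1) : Sk k 0 a = a • (1 : Polynomial ℚ) := by
  rw [Sk]
  simp only [descCount_len1, pow_zero]
  rw [Fintype.sum_equiv (Equiv.funUnique (Fin 1) (Fin (2*k+1)))
    (fun w : Fin 1 → Fin (2*k+1) => if (w 0 : ℕ) < a then (1 : Polynomial ℚ) else 0)
    (fun b : Fin (2*k+1) => if (b : ℕ) < a then (1 : Polynomial ℚ) else 0)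
    (fun w => rfl)]
  rw [Fin.sum_univ_eq_sum_range (fun b => if b < a then (1 : Polynomial ℚ) else 0) (2*k+1),
    H1 ha, Finset.sum_const, Finset.card_range]

lemma Sk_succ (k n a : ℕ) (ha : a ≤ 2*k+1) :
    Sk k (n+1) a = a • Pk k (n+1)
      + (Polynomial.X - 1) * ∑ j ∈ range ((a+1)/2), Sk k n (2*j) := by
  rw [Sk, sum_fun_cons]
  simp only [Fin.cons_zero]
  have key : ∀ b : Fin (2*k+1),
      (∑ w : Fin (n+1) → Fin (2*k+1),
        if (b:ℕ) < a then Polynomial.X ^ descCount OO (Fin.cons b w) else 0)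
      = (if (b:ℕ) < a then Pk k (n+1) else 0)
        + (if ((b:ℕ) < a ∧ ((b:ℕ)+1) % 2 = 1) then (Polynomial.X-1) * Sk k n (b:ℕ) else 0) := by
    intro b
    by_cases h : (b:ℕ) < a
    · simp only [if_pos h]
      simp only [h, true_and]
      rw [Bsplit]
    · simp [h]
  rw [Finset.sum_congr rfl (fun b _ => key b), Finset.sum_add_distrib]
  congr 1
  · rw [Fin.sum_univ_eq_sum_range (fun b => if b < a then Pk k (n+1) else 0) (2*k+1),
      H1 ha, Finset.sum_const, Finset.card_range]
  · rw [Fin.sum_univ_eq_sum_range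
      (fun b => if (b < a ∧ (b+1)%2=1) then (Polynomial.X-1) * Sk k n b else 0) (2*k+1)]
    simp only [ite_and]
    rw [H1 ha, H2, Finset.mul_sum]
lemma Sk_closed (k : ℕ) : ∀ (n : ℕ), ∀ j, j ≤ k →
    Sk k n (2*j) = Polynomial.C 2 *
      ∑ i ∈ range (n+1), ((j.choose (i+1) : ℚ)) • ((Polynomial.X-1)^i * Pk k (n-i)) := by
  intro n
  induction n with
  | zero =>
    intro j hj
    rw [Sk_zero k (2*j) (by omega)]
    simp only [zero_add, range_one, Finset.sum_singleton, Nat.choose_one_right, pow_zero, one_mul,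
      Nat.sub_zero, Pk_zero]
    rw [Polynomial.smul_eq_C_mul, nsmul_eq_mul, mul_one, mul_one, ← Polynomial.C_mul,
      ← Polynomial.C_eq_natCast]
    congr 1
    push_cast
    ring
  | succ n ih =>
    intro j hj
    have hh : ∀ i : ℕ, ∑ j' ∈ range j, ((j'.choose (i+1) : ℚ)) = (j.choose (i+2) : ℚ) := by
      intro i
      exact_mod_cast congrArg (Nat.cast : ℕ → ℚ) (hockey (i+1) j)
    have h2 : (2*j+1)/2 = j := by omega
    have hswap :
      ∑ i ∈ range (n+1), (∑ j' ∈ range j, ((j'.choose (i+1):ℚ)) • ((Polynomial.X-1)^i * Pk k (n-i)))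
        = ∑ i ∈ range (n+1), ((j.choose (i+2):ℚ)) • ((Polynomial.X-1)^i * Pk k (n-i)) :=
      Finset.sum_congr rfl (fun i _ => by rw [← Finset.sum_smul, hh i])
    have e1 : ∑ j' ∈ range j, Sk k n (2*j')
        = Polynomial.C 2 * ∑ i ∈ range (n+1), ((j.choose (i+2):ℚ)) • ((Polynomial.X-1)^i * Pk k (n-i)) := by
      rw [Finset.sum_congr rfl (fun j' hj' => ih j' (by have := Finset.mem_range.1 hj'; omega)),
        ← Finset.mul_sum, Finset.sum_comm, hswap]
    have e2 : (Polynomial.C 2 : Polynomial ℚ) * ∑ i ∈ range (n+1+1), ((j.choose (i+1):ℚ)) • ((Polynomial.X-1)^i * Pk k (n+1-i))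
        = (2*j) • Pk k (n+1)
          + Polynomial.C 2 * ∑ i ∈ range (n+1), ((j.choose (i+2):ℚ)) • ((Polynomial.X-1)^(i+1) * Pk k (n-i)) := by
      rw [Finset.sum_range_succ']
      simp only [Nat.succ_sub_succ_eq_sub, pow_zero, one_mul, zero_add, Nat.choose_one_right,
        Nat.sub_zero]
      rw [mul_add, add_comm]
      congr 1
      rw [Polynomial.smul_eq_C_mul, ← mul_assoc, ← Polynomial.C_mul, nsmul_eq_mul,
        ← Polynomial.C_eq_natCast]
      have hc : (2 * (j:ℚ)) = ((2*j : ℕ) : ℚ) := by push_cast; ring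
      rw [hc]
    rw [Sk_succ k n (2*j) (by omega), h2, e1, e2]
    congr 1
    rw [mul_left_comm]
    refine congrArg (Polynomial.C 2 * ·) ?_
    rw [Finset.mul_sum]
    exact Finset.sum_congr rfl (fun i _ => by
      rw [mul_smul_comm]
      congr 1
      ring)
lemma Pk_rec (k n : ℕ) :
    Pk k (n+1) = (2*k+1) • Pk k n
      + Polynomial.C 2 * ∑ i ∈ range n,
          (((k+1).choose (i+2) : ℚ)) • ((Polynomial.X-1)^(i+1) * Pk k (n-1-i)) := by
  cases n with
  | zero => simp [Pk_one, Pk_zero]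
  | succ n =>
    simp only [Nat.add_sub_cancel]
    have h := Sk_succ k n (2*k+1) (le_refl _)
    have h2 : (2*k+1+1)/2 = k+1 := by omega
    rw [h2] at h
    rw [← Sk_top k (n+1), h]
    congr 1
    rw [Finset.sum_congr rfl (fun j hj => Sk_closed k n j (by have := Finset.mem_range.1 hj; omega))]
    rw [← Finset.mul_sum, Finset.sum_comm]
    have hh : ∀ i, ∑ j ∈ range (k+1), ((j.choose (i+1):ℚ)) = ((k+1).choose (i+2) : ℚ) := fun i => by
      exact_mod_cast congrArg (Nat.cast : ℕ → ℚ) (hockey (i+1) (k+1))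
    have hswap : ∑ i ∈ range (n+1), ∑ j ∈ range (k+1),
          ((j.choose (i+1):ℚ)) • ((Polynomial.X-1)^i * Pk k (n-i))
        = ∑ i ∈ range (n+1), (((k+1).choose (i+2):ℚ)) • ((Polynomial.X-1)^i * Pk k (n-i)) :=
      Finset.sum_congr rfl (fun i _ => by rw [← Finset.sum_smul, hh i])
    rw [hswap, mul_left_comm]
    congr 1
    rw [Finset.mul_sum]
    refine Finset.sum_congr rfl (fun i _ => ?_)
    rw [mul_smul_comm]
    congr 1
    ring
lemma coeff_one_add_CX_pow (c : ℚ) (a r : ℕ) :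
    ((1 + Polynomial.C c * Polynomial.X)^a).coeff r = c^r * (a.choose r : ℚ) := by
  rw [add_comm, add_pow, Polynomial.finset_sum_coeff]
  simp only [one_pow, mul_one, mul_pow, ← Polynomial.C_pow, ← Polynomial.C_eq_natCast,
    Polynomial.coeff_mul_C, Polynomial.coeff_C_mul, Polynomial.coeff_X_pow]
  rw [Finset.sum_eq_single r]
  · simp
  · intro t _ ht
    simp [Ne.symm ht]
  · intro hr
    rw [Finset.mem_range, not_lt] at hr
    rw [Nat.choose_eq_zero_of_lt (by omega)]
    simp

noncomputable def Vp (k : ℕ) : Polynomial ℚ :=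
  (1 + Polynomial.X) - (1 + Polynomial.C 2 * Polynomial.X)^(k+1)

noncomputable def uu (k m n : ℕ) : ℚ := ((Vp k ^ m).coeff n)

noncomputable def Tk (k n : ℕ) : Polynomial ℚ :=
  ∑ m ∈ range (n+1),
    Polynomial.C ((-1:ℚ)^n * 2^m / 2^n * uu k m n) * (1 - Polynomial.X)^(n-m)

lemma Vp_coeff_zero (k : ℕ) : (Vp k).coeff 0 = 0 := by
  rw [Vp, Polynomial.coeff_sub, coeff_one_add_CX_pow]
  simp

lemma Vp_coeff_succ (k r : ℕ) :
    (Vp k).coeff (r+1)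
      = (if r = 0 then 1 else 0) - 2^(r+1) * (((k+1).choose (r+1)) : ℚ) := by
  rw [Vp, Polynomial.coeff_sub, coeff_one_add_CX_pow, Polynomial.coeff_add,
    Polynomial.coeff_one, Polynomial.coeff_X]
  congr 1
  simp only [Nat.add_eq_zero, and_false, if_false, zero_add]
  by_cases h : r = 0
  · simp [h]
  · rw [if_neg (by omega : ¬(r = 0 ∧ 1 = 0)), if_neg (by omega : ¬(1 = r+1)), if_neg h, zero_add]
lemma uu_zero_left (k n : ℕ) : uu k 0 (n+1) = 0 := by
  rw [uu, pow_zero, Polynomial.coeff_one]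
  simp

lemma uu_eq_zero (k m n : ℕ) (h : n < m) : uu k m n = 0 := by
  obtain ⟨q, hq⟩ := Polynomial.X_dvd_iff.2 (Vp_coeff_zero k)
  rw [uu, hq, mul_pow, mul_comm, Polynomial.coeff_mul_X_pow']
  rw [if_neg (by omega)]

lemma uu_rec (k m n : ℕ) :
    uu k (m+1) (n+1) = -(2*(k:ℚ)+1) * uu k m n
      - ∑ i ∈ range n, 2^(i+2) * (((k+1).choose (i+2)):ℚ) * uu k m (n-1-i) := by
  rw [uu, pow_succ', Polynomial.coeff_mul,
    Finset.Nat.sum_antidiagonal_eq_sum_range_succ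
      (fun a b => (Vp k).coeff a * (Vp k ^ m).coeff b) (n+1)]
  rw [Finset.sum_range_succ', Vp_coeff_zero, zero_mul, add_zero]
  rw [Finset.sum_range_succ']
  have h1 : (Vp k).coeff (0+1) * (Vp k ^ m).coeff (n+1-(0+1))
      = -(2*(k:ℚ)+1) * uu k m n := by
    rw [Vp_coeff_succ]
    simp only [if_pos rfl, zero_add, Nat.add_sub_cancel]
    rw [Nat.choose_one_right]
    rw [uu]
    push_cast
    ring
  rw [h1, add_comm, sub_eq_add_neg, ← Finset.sum_neg_distrib]
  congr 1
  apply Finset.sum_congr rfl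
  intro i hi
  have hi' := Finset.mem_range.1 hi
  have h2 : n + 1 - (i + 1 + 1) = n - 1 - i := by omega
  rw [h2, Vp_coeff_succ, if_neg (by omega : ¬ i + 1 = 0)]
  rw [(by rfl : uu k m (n-1-i) = (Vp k ^ m).coeff (n-1-i))]
  ring
lemma Tk_zero (k : ℕ) : Tk k 0 = 1 := by
  have h1 : uu k 0 0 = 1 := by rw [uu, pow_zero, Polynomial.coeff_one]; simp
  rw [Tk, Finset.sum_range_one, h1]
  norm_num

lemma hP_aux (i : ℕ) : (Polynomial.X - 1 : Polynomial ℚ)^(i+1)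
    = Polynomial.C ((-1:ℚ)^(i+1)) * (1 - Polynomial.X)^(i+1) := by
  rw [Polynomial.C_pow, ← mul_pow]
  congr 1
  simp only [map_neg, Polynomial.C_1]
  ring

lemma Tk_rec (k n : ℕ) :
    Tk k (n+1) = (2*k+1) • Tk k n
      + Polynomial.C 2 * ∑ i ∈ range n,
          (((k+1).choose (i+2) : ℚ)) • ((Polynomial.X-1)^(i+1) * Tk k (n-1-i)) := by
  have e1 : Tk k (n+1) = ∑ m ∈ range (n+1),
      (Polynomial.C ((-1:ℚ)^(n+1) * 2^(m+1) / 2^(n+1) * (-(2*(k:ℚ)+1) * uu k m n))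
          * (1 - Polynomial.X)^(n-m)
       - Polynomial.C ((-1:ℚ)^(n+1) * 2^(m+1) / 2^(n+1))
          * ∑ i ∈ range n,
            Polynomial.C (2^(i+2) * (((k+1).choose (i+2)):ℚ) * uu k m (n-1-i))
              * (1 - Polynomial.X)^(n-m)) := by
    rw [Tk, Finset.sum_range_succ']
    simp only [uu_zero_left, mul_zero, map_zero, zero_mul, add_zero,
      Nat.succ_sub_succ_eq_sub]
    apply Finset.sum_congr rfl
    intro m _
    rw [uu_rec, mul_sub, map_sub, sub_mul]
    congr 1
    rw [map_mul, map_sum, mul_assoc, Finset.sum_mul]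
  rw [e1, Finset.sum_sub_distrib]
  have e3 : (∑ m ∈ range (n+1),
      Polynomial.C ((-1:ℚ)^(n+1) * 2^(m+1) / 2^(n+1) * (-(2*(k:ℚ)+1) * uu k m n))
        * (1 - Polynomial.X)^(n-m)) = (2*k+1) • Tk k n := by
    rw [Tk, Finset.smul_sum]
    apply Finset.sum_congr rfl
    intro m _
    rw [← smul_mul_assoc, ← map_nsmul]
    congr 2
    rw [nsmul_eq_mul]
    push_cast
    field_simp
    ring
  rw [e3]
  have e4 : ∀ m ∈ range (n+1),
      Polynomial.C ((-1:ℚ)^(n+1) * 2^(m+1) / 2^(n+1))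
          * ∑ i ∈ range n,
            Polynomial.C (2^(i+2) * (((k+1).choose (i+2)):ℚ) * uu k m (n-1-i))
              * (1 - Polynomial.X)^(n-m)
        = ∑ i ∈ range n,
            Polynomial.C ((-1:ℚ)^(n+1) * 2^(m+1) / 2^(n+1))
              * (Polynomial.C (2^(i+2) * (((k+1).choose (i+2)):ℚ) * uu k m (n-1-i))
                * (1 - Polynomial.X)^(n-m)) := fun m _ => Finset.mul_sum _ _ _
  rw [Finset.sum_congr rfl e4, Finset.sum_comm, sub_eq_add_neg, Finset.mul_sum]
  congr 1
  rw [← Finset.sum_neg_distrib]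
  apply Finset.sum_congr rfl
  intro i hi
  rw [neg_eq_iff_eq_neg]
  have hin : i < n := Finset.mem_range.1 hi
  obtain ⟨d, hd⟩ : ∃ d, n = d + i + 1 := ⟨n-1-i, by omega⟩
  subst hd
  have hd2 : d + i + 1 - 1 - i = d := by omega
  rw [hd2]
  have htr : ∑ m ∈ range (d+i+1+1),
      Polynomial.C ((-1:ℚ)^(d+i+1+1) * 2^(m+1) / 2^(d+i+1+1))
        * (Polynomial.C (2^(i+2) * (((k+1).choose (i+2)):ℚ) * uu k m d)
          * (1 - Polynomial.X)^(d+i+1-m))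
      = ∑ m ∈ range (d+1),
      Polynomial.C ((-1:ℚ)^(d+i+1+1) * 2^(m+1) / 2^(d+i+1+1))
        * (Polynomial.C (2^(i+2) * (((k+1).choose (i+2)):ℚ) * uu k m d)
          * (1 - Polynomial.X)^(d+i+1-m)) := by
    refine (Finset.sum_subset (Finset.range_subset_range.2 (by omega)) ?_).symm
    intro m hm1 hm2
    rw [Finset.mem_range] at hm1 hm2
    rw [uu_eq_zero k m d (by omega), mul_zero, map_zero, zero_mul, mul_zero]
  rw [htr, Tk, hP_aux i]
  rw [mul_assoc (Polynomial.C ((-1:ℚ)^(i+1)))]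
  rw [Finset.mul_sum, Finset.mul_sum, Finset.smul_sum, Finset.mul_sum, ← Finset.sum_neg_distrib]
  apply Finset.sum_congr rfl
  intro m hm
  have hmd : m < d + 1 := Finset.mem_range.1 hm
  have hpow : (1 - Polynomial.X : Polynomial ℚ)^(d+i+1-m)
      = (1 - Polynomial.X)^(i+1) * (1 - Polynomial.X)^(d-m) := by
    rw [← pow_add]
    congr 1
    omega
  rw [hpow, ← mul_assoc, ← Polynomial.C_mul]
  have hsc : (-1:ℚ)^(d+i+1+1) * 2^(m+1) / 2^(d+i+1+1) * (2^(i+2) * (((k+1).choose (i+2)):ℚ) * uu k m d)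
      = -(2 * ((((k+1).choose (i+2)):ℚ) * ((-1:ℚ)^(i+1) * ((-1:ℚ)^d * 2^m / 2^d * uu k m d)))) := by
    field_simp
    ring
  rw [hsc]
  simp only [map_neg, map_mul, Polynomial.smul_eq_C_mul]
  ring
lemma Pk_eq_Tk (k : ℕ) : ∀ n, Pk k n = Tk k n := by
  intro n
  induction n using Nat.strong_induction_on with
  | _ n ih =>
    match n with
    | 0 => rw [Pk_zero, Tk_zero]
    | (n+1) =>
      rw [Pk_rec, Tk_rec, ih n (by omega)]
      congr 1
      rw [Finset.mul_sum, Finset.mul_sum]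
      apply Finset.sum_congr rfl
      intro i hi
      rw [ih (n-1-i) (by omega)]
lemma coeff_one_sub_X_pow (d p : ℕ) :
    ((1 - Polynomial.X : Polynomial ℚ)^d).coeff p = (-1)^p * (d.choose p : ℚ) := by
  have h : (1 - Polynomial.X : Polynomial ℚ) = 1 + Polynomial.C (-1) * Polynomial.X := by
    simp only [map_neg, Polynomial.C_1]
    ring
  rw [h, coeff_one_add_CX_pow]

lemma card_eq_coeff (k n p : ℕ) :
    ((Finset.univ.filter (fun w : Fin n → Fin (2*k+1) => descCount OO w = p)).card : ℚ)
      = (Pk k n).coeff p := by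
  rw [Pk, Polynomial.finset_sum_coeff]
  simp only [Polynomial.coeff_X_pow]
  rw [Finset.card_filter]
  push_cast
  apply Finset.sum_congr rfl
  intro w _
  by_cases h : descCount OO w = p
  · rw [if_pos h, if_pos h.symm]
  · rw [if_neg h, if_neg (fun hh => h hh.symm)]

lemma hterm (n a b : ℕ) :
    ((1+Polynomial.X)^a * ((1 + Polynomial.C 2 * Polynomial.X)^b) : Polynomial ℚ).coeff n
      = ∑ i ∈ range (n+1), 2^i * (b.choose i : ℚ) * (a.choose (n-i) : ℚ) := by
  rw [Polynomial.coeff_mul, Finset.Nat.sum_antidiagonal_eq_sum_range_succ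
    (fun x y => ((1+Polynomial.X)^a : Polynomial ℚ).coeff x
      * ((1 + Polynomial.C 2 * Polynomial.X)^b : Polynomial ℚ).coeff y) n]
  rw [← Finset.sum_range_reflect]
  apply Finset.sum_congr rfl
  intro i hi
  have hi' := Finset.mem_range.1 hi
  have h1 : n + 1 - 1 - i = n - i := by omega
  have h2 : n - (n - i) = i := by omega
  rw [h1, h2, Polynomial.coeff_one_add_X_pow ℚ, coeff_one_add_CX_pow]
  ring

lemma uu_eq_sum (k m n : ℕ) :
    uu k m n = ∑ j ∈ range (m+1), (-1:ℚ)^j * (m.choose j : ℚ)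
      * ∑ i ∈ range (n+1), 2^i * (((k*j+j).choose i : ℚ)) * ((m-j).choose (n-i) : ℚ) := by
  rw [uu, Vp, sub_pow, Polynomial.finset_sum_coeff, ← Finset.sum_range_reflect]
  apply Finset.sum_congr rfl
  intro j hj
  have hj' := Finset.mem_range.1 hj
  have h1 : m + 1 - 1 - j = m - j := by omega
  have h2 : m - (m - j) = j := by omega
  rw [h1, h2]
  have h3 : (((1 + Polynomial.C 2 * Polynomial.X) : Polynomial ℚ)^(k+1))^j
      = (1 + Polynomial.C 2 * Polynomial.X)^(k*j+j) := by
    rw [← pow_mul]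
    congr 1
    ring
  rw [h3, Nat.choose_symm (by omega : j ≤ m)]
  have hsign : ((-1 : Polynomial ℚ))^((m-j)+m) = Polynomial.C ((-1:ℚ)^j) := by
    have h4 : (m-j)+m = j + 2*(m-j) := by omega
    rw [h4, pow_add, pow_mul, neg_one_sq, one_pow, mul_one, Polynomial.C_pow, map_neg,
      Polynomial.C_1]
  rw [hsign, ← Polynomial.C_eq_natCast, Polynomial.coeff_mul_C, mul_assoc,
    Polynomial.coeff_C_mul, hterm]
  ring

lemma Tk_coeff (k n p : ℕ) :
    (Tk k n).coeff p = ∑ m ∈ range (n+1),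
      (-1:ℚ)^n * 2^m / 2^n * uu k m n * ((-1)^p * ((n-m).choose p : ℚ)) := by
  rw [Tk, Polynomial.finset_sum_coeff]
  apply Finset.sum_congr rfl
  intro m _
  rw [Polynomial.coeff_C_mul, coeff_one_sub_X_pow]

lemma bridge (n M A : ℕ) :
    ∑ i ∈ range (n+1), 2^i * (M.choose i : ℚ) * (A.choose (n-i) : ℚ)
      = ∑ i ∈ range (M+1), 2^i * (M.choose i : ℚ)
          * (((if i ≤ n then A.choose (n-i) else 0) : ℕ) : ℚ) := by
  have L : ∑ i ∈ range (n+1), 2^i * (M.choose i:ℚ) * ((A.choose (n-i)):ℚ)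
      = ∑ i ∈ range (n+M+1), 2^i * (M.choose i:ℚ)
          * (((if i ≤ n then A.choose (n-i) else 0):ℕ):ℚ) := by
    trans (∑ i ∈ range (n+1), 2^i * (M.choose i:ℚ)
        * (((if i ≤ n then A.choose (n-i) else 0):ℕ):ℚ))
    · exact Finset.sum_congr rfl (fun i hi => by
        rw [if_pos (by have := Finset.mem_range.1 hi; omega : i ≤ n)])
    exact Finset.sum_subset (Finset.range_subset_range.2 (by omega)) (fun i hi1 hi2 => by
      rw [Finset.mem_range] at hi1 hi2
      rw [if_neg (by omega)]
      simp)
  have R : ∑ i ∈ range (M+1), 2^i * (M.choose i:ℚ)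
          * (((if i ≤ n then A.choose (n-i) else 0):ℕ):ℚ)
      = ∑ i ∈ range (n+M+1), 2^i * (M.choose i:ℚ)
          * (((if i ≤ n then A.choose (n-i) else 0):ℕ):ℚ) :=
    Finset.sum_subset (Finset.range_subset_range.2 (by omega)) (fun i hi1 hi2 => by
      rw [Finset.mem_range] at hi1 hi2
      rw [Nat.choose_eq_zero_of_lt (by omega)]
      simp)
  rw [L, ← R]

lemma zp (m n i : ℕ) : (2:ℚ) ^ ((m : ℤ) - (n : ℤ) + (i : ℤ)) = 2^m / 2^n * 2^i := by
  rw [zpow_add₀ (two_ne_zero), zpow_sub₀ (two_ne_zero), zpow_natCast, zpow_natCast,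
    zpow_natCast]

lemma desc_final (k n p : ℕ) :
    ((Finset.univ.filter (fun w : Fin n → Fin (2 * k + 1) => descCount OO w = p)).card : ℚ)
      = ∑ m ∈ range (n + 1), ∑ j ∈ range (m + 1), ∑ i ∈ range (k * j + j + 1),
          (-1 : ℚ) ^ (n + p + j) * (2 : ℚ) ^ ((m : ℤ) - (n : ℤ) + (i : ℤ))
            * (m.choose j : ℚ) * ((if i ≤ n then (m - j).choose (n - i) else 0 : ℕ) : ℚ)
            * ((k * j + j).choose i : ℚ) * ((n - m).choose p : ℚ) := by
  rw [card_eq_coeff, Pk_eq_Tk, Tk_coeff]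
  apply Finset.sum_congr rfl
  intro m _
  rw [uu_eq_sum]
  have hb : (∑ j ∈ range (m+1), (-1:ℚ)^j * (m.choose j : ℚ)
        * ∑ i ∈ range (n+1), 2^i * (((k*j+j).choose i : ℚ)) * ((m-j).choose (n-i) : ℚ))
      = ∑ j ∈ range (m+1), (-1:ℚ)^j * (m.choose j : ℚ)
        * ∑ i ∈ range (k*j+j+1), 2^i * (((k*j+j).choose i : ℚ))
            * (((if i ≤ n then (m-j).choose (n-i) else 0):ℕ):ℚ) :=
    Finset.sum_congr rfl (fun j _ => by rw [bridge n (k*j+j) (m-j)])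
  rw [hb, Finset.mul_sum, Finset.sum_mul]
  apply Finset.sum_congr rfl
  intro j _
  rw [Finset.mul_sum, Finset.mul_sum, Finset.sum_mul]
  apply Finset.sum_congr rfl
  intro i _
  rw [zp, pow_add, pow_add]
  ring
lemma rev_rise (k n : ℕ) (w : Fin n → Fin (2*k+1)) :
    riseCount OO (fun i => (w i).rev) = descCount OO w := by
  rw [riseCount, descCount]
  congr 1
  apply Finset.filter_congr
  intro q _
  have h1 := (w q.1).isLt
  have h2 := (w q.2).isLt
  simp only [Fin.val_rev, OO]
  omega

lemma rev_desc (k n : ℕ) (w : Fin n → Fin (2*k+1)) :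
    descCount OO (fun i => (w i).rev) = riseCount OO w := by
  rw [riseCount, descCount]
  congr 1
  apply Finset.filter_congr
  intro q _
  have h1 := (w q.1).isLt
  have h2 := (w q.2).isLt
  simp only [Fin.val_rev, OO]
  omega

lemma card_rise_eq (k n p : ℕ) :
    (Finset.univ.filter (fun w : Fin n → Fin (2*k+1) => riseCount OO w = p)).card
      = (Finset.univ.filter (fun w : Fin n → Fin (2*k+1) => descCount OO w = p)).card := by
  apply Finset.card_bij (fun w _ => (fun i => (w i).rev))
  · intro w hw
    simp only [Finset.mem_filter, Finset.mem_univ, true_and] at hw ⊢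
    rw [rev_desc]
    exact hw
  · intro w1 _ w2 _ he
    funext i
    exact Fin.rev_injective (congrFun he i)
  · intro v hv
    simp only [Finset.mem_filter, Finset.mem_univ, true_and] at hv
    refine ⟨fun i => (v i).rev, ?_, ?_⟩
    · simp only [Finset.mem_filter, Finset.mem_univ, true_and]
      rw [rev_rise]
      exact hv
    · funext i
      rw [Fin.rev_rev]

/- `O = {1,3,5,…}` is encoded as `fun x => x % 2 = 1`.  The summands are interpreted
in `ℚ`, with `2^(m-n+i)` the integer power `(2 : ℚ) ^ ((m : ℤ) - n + i)`; the binomial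
coefficient `C(m-j, n-i)` is `0` when `n - i < 0`, i.e. when `i > n`, which the
`if`-guard makes explicit (truncated natural subtraction would not be faithful). -/
theorem stmt_15 (k n p : ℕ) :
    ((Finset.univ.filter (fun w : Fin n → Fin (2 * k + 1) =>
          descCount (fun x => x % 2 = 1) w = p)).card : ℚ)
        = ∑ m ∈ Finset.range (n + 1), ∑ j ∈ Finset.range (m + 1),
            ∑ i ∈ Finset.range (k * j + j + 1),
              (-1 : ℚ) ^ (n + p + j) * (2 : ℚ) ^ ((m : ℤ) - (n : ℤ) + (i : ℤ))
                * (m.choose j : ℚ)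
                * ((if i ≤ n then (m - j).choose (n - i) else 0 : ℕ) : ℚ)
                * ((k * j + j).choose i : ℚ) * ((n - m).choose p : ℚ)
      ∧ ((Finset.univ.filter (fun w : Fin n → Fin (2 * k + 1) =>
            riseCount (fun x => x % 2 = 1) w = p)).card : ℚ)
        = ∑ m ∈ Finset.range (n + 1), ∑ j ∈ Finset.range (m + 1),
            ∑ i ∈ Finset.range (k * j + j + 1),
              (-1 : ℚ) ^ (n + p + j) * (2 : ℚ) ^ ((m : ℤ) - (n : ℤ) + (i : ℤ))
                * (m.choose j : ℚ)
                * ((if i ≤ n then (m - j).choose (n - i) else 0 : ℕ) : ℚ)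
                * ((k * j + j).choose i : ℚ) * ((n - m).choose p : ℚ) := by
  constructor
  · exact desc_final k n p
  · have h : ((Finset.univ.filter (fun w : Fin n → Fin (2*k+1) =>
        riseCount OO w = p)).card : ℚ)
        = ((Finset.univ.filter (fun w : Fin n → Fin (2*k+1) =>
        descCount OO w = p)).card : ℚ) := by exact_mod_cast card_rise_eq k n p
    exact h.trans (desc_final k n p)
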